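/- Let χ₁, χ₂ be 1-cocycles for Γ with values in gl(n,ℂ) under Ad σ, and define ω(χ₁,χ₂) = −∑_{k=1}^g [ B(χ₁(#∂R/∂a_k), χ₂(a_k)) + B(χ₁(#∂R/∂b_k), χ₂(b_k)) ] with B(u,v)=tr(uv). Then ω(χ₁,χ₂) equals ∑_{k=1}^g [ B(χ₁(α_k), σ(R_{k−1})·χ₂(a_k)) − B(χ₁(β_k), σ(R_k)·χ₂(b_k)) ], where σ(γ)·X = σ(γ) X σ(γ)⁻¹. -/

import Mathlib

namespace GoldmanDual

open scoped commutatorElement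

variable {G : Type*} [Group G]

/-- Partial products `R_k = ∏_{i<k} [a_i, b_i]` (0-based, `R 0 = 1`). -/
def R (a b : ℕ → G) (k : ℕ) : G := (((List.range k).map fun i => ⁅a i, b i⁆)).prod

/-- Dual generator `α_k = R_{k-1} b_k⁻¹ R_k⁻¹`. -/
def α (a b : ℕ → G) (k : ℕ) : G := R a b k * (b k)⁻¹ * (R a b (k + 1))⁻¹

/-- Dual generator `β_k = R_k a_k⁻¹ R_{k-1}⁻¹`. -/
def β (a b : ℕ → G) (k : ℕ) : G := R a b (k + 1) * (a k)⁻¹ * (R a b k)⁻¹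

/-- The Goldman form
`ω(χ₁,χ₂) = −∑ₖ [B(χ₁(#∂R/∂a_k), χ₂(a_k)) + B(χ₁(#∂R/∂b_k), χ₂(b_k))]`, with
`B(u,v) = tr(uv)`, `#∂R/∂a_k = R_{k−1}⁻¹ − R_{k−1}⁻¹α_k`, and
`#∂R/∂b_k = R_k⁻¹β_k − R_k⁻¹` (the cocycle `χ₁` being extended ℤ-linearly to
the group ring), equals
`∑ₖ [B(χ₁(α_k), σ(R_{k−1})·χ₂(a_k)) − B(χ₁(β_k), σ(R_k)·χ₂(b_k))]`. -/
theorem goldman_form_dual {n : ℕ} (a b : ℕ → G) (g : ℕ) (hrel : R a b g = 1)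
    (σ : G →* Matrix.GeneralLinearGroup (Fin n) ℂ)
    (χ₁ χ₂ : G → Matrix (Fin n) (Fin n) ℂ)
    (hχ₁ : ∀ γ₁ γ₂ : G, χ₁ (γ₁ * γ₂)
      = χ₁ γ₁ + (↑(σ γ₁) : Matrix (Fin n) (Fin n) ℂ) * χ₁ γ₂
          * (↑(σ γ₁)⁻¹ : Matrix (Fin n) (Fin n) ℂ))
    (hχ₂ : ∀ γ₁ γ₂ : G, χ₂ (γ₁ * γ₂)
      = χ₂ γ₁ + (↑(σ γ₁) : Matrix (Fin n) (Fin n) ℂ) * χ₂ γ₂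
          * (↑(σ γ₁)⁻¹ : Matrix (Fin n) (Fin n) ℂ)) :
    -(∑ k ∈ Finset.range g,
        (Matrix.trace ((χ₁ ((R a b k)⁻¹) - χ₁ ((R a b k)⁻¹ * α a b k)) * χ₂ (a k))
          + Matrix.trace ((χ₁ ((R a b (k + 1))⁻¹ * β a b k)
              - χ₁ ((R a b (k + 1))⁻¹)) * χ₂ (b k))))
      = ∑ k ∈ Finset.range g,
          (Matrix.trace (χ₁ (α a b k)
              * ((↑(σ (R a b k)) : Matrix (Fin n) (Fin n) ℂ) * χ₂ (a k)
                  * (↑(σ (R a b k))⁻¹ : Matrix (Fin n) (Fin n) ℂ)))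
            - Matrix.trace (χ₁ (β a b k)
                * ((↑(σ (R a b (k + 1))) : Matrix (Fin n) (Fin n) ℂ) * χ₂ (b k)
                    * (↑(σ (R a b (k + 1)))⁻¹ : Matrix (Fin n) (Fin n) ℂ)))) := by
  rw [neg_eq_iff_eq_neg, ← Finset.sum_neg_distrib]
  refine Finset.sum_congr rfl fun k _ => ?_
  have hkey : ∀ (x : G) (u v : Matrix (Fin n) (Fin n) ℂ),
      Matrix.trace (((↑(σ x)⁻¹ : Matrix (Fin n) (Fin n) ℂ) * u
          * (↑(σ x) : Matrix (Fin n) (Fin n) ℂ)) * v)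
        = Matrix.trace (u * ((↑(σ x) : Matrix (Fin n) (Fin n) ℂ) * v
            * (↑(σ x)⁻¹ : Matrix (Fin n) (Fin n) ℂ))) := by
    intro x u v
    rw [mul_assoc, mul_assoc, Matrix.trace_mul_comm, ← mul_assoc, ← mul_assoc,
      mul_assoc]
    simp only [mul_assoc]
  have h1 := hχ₁ ((R a b k)⁻¹) (α a b k)
  have h2 := hχ₁ ((R a b (k + 1))⁻¹) (β a b k)
  simp only [map_inv, inv_inv] at h1 h2
  rw [h1, h2]
  simp only [sub_add_cancel_left, add_sub_cancel_left, neg_mul, Matrix.trace_neg]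
  rw [hkey, hkey]
  ring

end GoldmanDual
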